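/- Suppose the self-similar group G is contracting with nucleus N, the finite symmetric generating set S contains N, p ≥ 1, and η_{p,n₀} < 1 for some n₀ ≥ 1. Then for every integer l ≥ 2 there exists a constant C > 0 such that for every g ∈ G the sum Σ_{v ∈ X*, l(g|_v) ≥ l} l(g|_v)^p, taken over all finite words v whose section has word length at least l, is at most C·l(g)^p (in particular this sum is finite). (Proposition 4.4 of the paper.) -/

import Mathlib

open Filter Topology
open scoped ENNReal NNReal

/-- A self-similar group: a group `G` acting on the set of finite words `List X`
by length-preserving bijections, together with a section (restriction) map. -/
structure SelfSimilarGroup (X : Type*) (G : Type*) [Group G] where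
  act : G → List X → List X
  sec : G → List X → G
  length_act : ∀ g v, (act g v).length = v.length
  act_append : ∀ g v w, act g (v ++ w) = act g v ++ act (sec g v) w
  sec_append : ∀ g v w, sec g (v ++ w) = sec (sec g v) w
  act_one : ∀ v, act 1 v = v
  sec_one : ∀ v, sec 1 v = 1
  act_mul : ∀ g h v, act (g * h) v = act g (act h v)
  sec_mul : ∀ g h v, sec (g * h) v = sec g (act h v) * sec h v

/-- Word length with respect to a finite generating set `S`. -/
noncomputable def wordLength {G : Type*} [Group G] (S : Finset G) (g : G) : ℕ :=
  sInf {n | ∃ w : List G, (∀ s ∈ w, s ∈ S) ∧ w.length = n ∧ w.prod = g}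

/-- The contraction coefficient `η_{p,n} ∈ [0,∞]`: the limsup of
`(Σ_{v ∈ X^n} l(g|_v)^p)^{1/p} / l(g)` as `l(g) → ∞` (along the filter generated by
the sets `{g : l(g) ≥ m}`).  Words of length `n` are encoded as functions `Fin n → X`. -/
noncomputable def eta {X G : Type*} [Fintype X] [Group G]
    (A : SelfSimilarGroup X G) (S : Finset G) (p : ℝ) (n : ℕ) : ℝ≥0∞ :=
  Filter.limsup
    (fun g : G =>
      (∑ f : Fin n → X, (wordLength S (A.sec g (List.ofFn f)) : ℝ≥0∞) ^ p) ^ (1 / p)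
        / (wordLength S g : ℝ≥0∞))
    (Filter.comap (wordLength S) Filter.atTop)

/-- `N` is the nucleus of a contracting self-similar group: a finite subset containing `1`,
closed under sections, absorbing all sections of every element at deep enough levels. -/
def SelfSimilarGroup.IsNucleus {X G : Type*} [Group G]
    (A : SelfSimilarGroup X G) (N : Finset G) : Prop :=
  (1 : G) ∈ N ∧ (∀ g ∈ N, ∀ v : List X, A.sec g v ∈ N) ∧
    ∀ g : G, ∃ n₀ : ℕ, ∀ v : List X, n₀ ≤ v.length → A.sec g v ∈ N

/-! ### Auxiliary lemmas about `wordLength` -/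

section WordLength
variable {G : Type*} [Group G]

private lemma wl_nonempty {S : Finset G} (hgen : Subgroup.closure (S : Set G) = ⊤)
    (hsym : ∀ s ∈ S, s⁻¹ ∈ S) (g : G) :
    {n | ∃ w : List G, (∀ s ∈ w, s ∈ S) ∧ w.length = n ∧ w.prod = g}.Nonempty := by
  have hmem : g ∈ Submonoid.closure (S : Set G) := by
    have hx : g ∈ Subgroup.closure (S : Set G) := by rw [hgen]; trivial
    refine Subgroup.closure_induction (fun y hy => Submonoid.subset_closure hy)
      (one_mem _) (fun a b _ _ ha hb => mul_mem ha hb) (fun a _ ha => ?_) hx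
    refine Submonoid.closure_induction (fun y hy => Submonoid.subset_closure (hsym y hy))
      (by simpa using one_mem _)
      (fun a b _ _ ha hb => by rw [mul_inv_rev]; exact mul_mem hb ha) ha
  obtain ⟨w, hw, hprod⟩ := Submonoid.exists_list_of_mem_closure hmem
  exact ⟨w.length, w, hw, rfl, hprod⟩

private lemma wl_spec {S : Finset G} (hgen : Subgroup.closure (S : Set G) = ⊤)
    (hsym : ∀ s ∈ S, s⁻¹ ∈ S) (g : G) :
    ∃ w : List G, (∀ s ∈ w, s ∈ S) ∧ w.length = wordLength S g ∧ w.prod = g :=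
  Nat.sInf_mem (wl_nonempty hgen hsym g)

private lemma wl_le {S : Finset G} {g : G} {n : ℕ}
    (h : ∃ w : List G, (∀ s ∈ w, s ∈ S) ∧ w.length = n ∧ w.prod = g) :
    wordLength S g ≤ n := Nat.sInf_le h

private lemma wl_one (S : Finset G) : wordLength S 1 = 0 :=
  Nat.le_zero.mp (wl_le ⟨[], by simp, rfl, rfl⟩)

private lemma wl_eq_zero {S : Finset G} (hgen : Subgroup.closure (S : Set G) = ⊤)
    (hsym : ∀ s ∈ S, s⁻¹ ∈ S) {g : G} (h : wordLength S g = 0) : g = 1 := by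
  obtain ⟨w, _, hwl, hwp⟩ := wl_spec hgen hsym g
  rw [h, List.length_eq_zero_iff] at hwl
  rw [← hwp, hwl, List.prod_nil]

private lemma wl_mul_le {S : Finset G} (hgen : Subgroup.closure (S : Set G) = ⊤)
    (hsym : ∀ s ∈ S, s⁻¹ ∈ S) (g h : G) :
    wordLength S (g * h) ≤ wordLength S g + wordLength S h := by
  obtain ⟨w₁, hw₁, hl₁, hp₁⟩ := wl_spec hgen hsym g
  obtain ⟨w₂, hw₂, hl₂, hp₂⟩ := wl_spec hgen hsym h
  refine wl_le ⟨w₁ ++ w₂, ?_, by simp [hl₁, hl₂], by simp [hp₁, hp₂]⟩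
  intro s hs; rcases List.mem_append.mp hs with h | h
  exacts [hw₁ s h, hw₂ s h]

private lemma wl_mem_S {S : Finset G} {s : G} (hs : s ∈ S) : wordLength S s ≤ 1 :=
  wl_le ⟨[s], by simp [hs], rfl, by simp⟩

private lemma ball_finite {S : Finset G} (hgen : Subgroup.closure (S : Set G) = ⊤)
    (hsym : ∀ s ∈ S, s⁻¹ ∈ S) (m : ℕ) : {g : G | wordLength S g < m}.Finite := by
  have h1 : {w : List {x // x ∈ S} | w.length < m}.Finite := List.finite_length_lt _ m
  refine (h1.image (fun w => (w.map Subtype.val).prod)).subset ?_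
  intro g hg
  obtain ⟨w, hwS, hwl, hwp⟩ := wl_spec hgen hsym g
  refine ⟨w.attach.map fun x => (⟨x.1, hwS x.1 x.2⟩ : {x // x ∈ S}), ?_, ?_⟩
  · simp only [Set.mem_setOf_eq, List.length_map, List.length_attach, hwl]
    exact hg
  · simpa [List.map_map, Function.comp, List.attach_map_subtype_val] using hwp

end WordLength

/-! ### Auxiliary lemmas about sections -/

section Sections
variable {X G : Type*} [Fintype X] [Group G]

private lemma sec_single_bound (A : SelfSimilarGroup X G) {S N : Finset G}
    (hN : A.IsNucleus N) (hNS : N ⊆ S) (h : G) :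
    ∃ B : ℕ, ∀ v : List X, wordLength S (A.sec h v) ≤ B := by
  obtain ⟨K, hK⟩ := hN.2.2 h
  have hfin : {v : List X | v.length < K}.Finite := List.finite_length_lt X K
  refine ⟨max (hfin.toFinset.sup fun v => wordLength S (A.sec h v)) 1, fun v => ?_⟩
  rcases lt_or_ge v.length K with hv | hv
  · have hv' : v ∈ hfin.toFinset := by simpa [Set.Finite.mem_toFinset] using hv
    exact le_max_of_le_left (Finset.le_sup (f := fun v => wordLength S (A.sec h v)) hv')
  · exact le_max_of_le_right (wl_mem_S (hNS (hK v hv)))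

private lemma exists_M (A : SelfSimilarGroup X G) {S N : Finset G}
    (hgen : Subgroup.closure (S : Set G) = ⊤) (hsym : ∀ s ∈ S, s⁻¹ ∈ S)
    (hN : A.IsNucleus N) (hNS : N ⊆ S) :
    ∃ M : ℕ, 1 ≤ M ∧ ∀ (g : G) (v : List X), wordLength S (A.sec g v) ≤ M * wordLength S g := by
  have hB := fun s : {x // x ∈ S} => sec_single_bound A hN hNS s.1
  choose B hB using hB
  refine ⟨max (Finset.univ.sup B) 1, le_max_right _ _, ?_⟩
  set M := max (Finset.univ.sup B) 1 with hM
  have hBM : ∀ (s : G), s ∈ S → ∀ v : List X, wordLength S (A.sec s v) ≤ M := by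
    intro s hs v
    exact le_trans (hB ⟨s, hs⟩ v) (le_max_of_le_left (Finset.le_sup (Finset.mem_univ _)))
  have key : ∀ w : List G, (∀ s ∈ w, s ∈ S) → ∀ v : List X,
      wordLength S (A.sec w.prod v) ≤ M * w.length := by
    intro w
    induction w with
    | nil => intro _ v; simp [A.sec_one, wl_one]
    | cons s t ih =>
      intro hw v
      rw [List.prod_cons, A.sec_mul]
      calc wordLength S (A.sec s (A.act t.prod v) * A.sec t.prod v)
          ≤ wordLength S (A.sec s (A.act t.prod v)) + wordLength S (A.sec t.prod v) :=
            wl_mul_le hgen hsym _ _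
        _ ≤ M + M * t.length :=
            add_le_add (hBM s (hw s List.mem_cons_self) _)
              (ih (fun x hx => hw x (List.mem_cons_of_mem _ hx)) v)
        _ = M * (s :: t).length := by simp [List.length_cons]; ring
  intro g v
  obtain ⟨w, hwS, hwl, hwp⟩ := wl_spec hgen hsym g
  have hkey := key w hwS v
  rw [hwp, hwl] at hkey
  exact hkey

/-- The prefix-splitting equivalence. -/
private def prependEquiv (X : Type*) (n : ℕ) :
    ((Fin n → X) × List X) ≃ {v : List X // n ≤ v.length} where
  toFun fu := ⟨List.ofFn fu.1 ++ fu.2, by simp⟩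
  invFun v := (fun i => v.1[(i : ℕ)]'(lt_of_lt_of_le i.2 v.2), v.1.drop n)
  left_inv := by
    rintro ⟨f, u⟩
    refine Prod.ext ?_ ?_
    · funext i
      simp [List.getElem_append_left, List.getElem_ofFn]
    · simp [List.drop_left' (List.length_ofFn (f := f))]
  right_inv := by
    rintro ⟨v, hv⟩
    apply Subtype.ext
    show List.ofFn _ ++ v.drop n = v
    have h1 : List.ofFn (fun i : Fin n => v[(i : ℕ)]'(lt_of_lt_of_le i.2 hv)) = v.take n := by
      apply List.ext_getElem
      · simp [Nat.min_eq_left hv]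
      · intro i h₁ h₂
        simp [List.getElem_take]
    rw [h1, List.take_append_drop]

/-- The full sum over all words of the `p`-th powers of long sections. -/
private noncomputable def secSum (A : SelfSimilarGroup X G) (S : Finset G) (l : ℕ) (p : ℝ)
    (g : G) : ℝ≥0∞ :=
  ∑' v : List X,
    if l ≤ wordLength S (A.sec g v) then (wordLength S (A.sec g v) : ℝ≥0∞) ^ p else 0

private lemma secSum_ne_top (A : SelfSimilarGroup X G) {S N : Finset G}
    (hN : A.IsNucleus N) (hNS : N ⊆ S) {l : ℕ} (hl : 2 ≤ l) {p : ℝ} (hp : 0 ≤ p) (g : G) :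
    secSum A S l p g ≠ ⊤ := by
  obtain ⟨K, hK⟩ := hN.2.2 g
  have hfin : {v : List X | v.length < K}.Finite := List.finite_length_lt X K
  rw [secSum, tsum_eq_sum (s := hfin.toFinset) ?_]
  · refine (ENNReal.sum_lt_top.mpr fun v _ => ?_).ne
    split
    · exact ENNReal.rpow_lt_top_of_nonneg hp (ENNReal.natCast_ne_top _)
    · exact ENNReal.zero_lt_top
  · intro v hv
    have hvK : K ≤ v.length := by
      by_contra hc
      exact hv (by simpa [Set.Finite.mem_toFinset] using not_le.mp hc)
    have h1 : wordLength S (A.sec g v) ≤ 1 := wl_mem_S (hNS (hK v hvK))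
    rw [if_neg (by omega)]

private lemma secSum_split (A : SelfSimilarGroup X G) (S : Finset G) (l n₀ : ℕ) (p : ℝ) (g : G) :
    secSum A S l p g =
      (∑' v : ({v : List X | n₀ ≤ v.length}ᶜ : Set (List X)),
          if l ≤ wordLength S (A.sec g ↑v) then (wordLength S (A.sec g ↑v) : ℝ≥0∞) ^ p else 0)
        + ∑ f : Fin n₀ → X, secSum A S l p (A.sec g (List.ofFn f)) := by
  classical
  set F : List X → ℝ≥0∞ := fun v =>
    if l ≤ wordLength S (A.sec g v) then (wordLength S (A.sec g v) : ℝ≥0∞) ^ p else 0 with hF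
  have h1 : (∑' v : {v : List X | n₀ ≤ v.length}, F ↑v)
      + ∑' v : ({v : List X | n₀ ≤ v.length}ᶜ : Set (List X)), F ↑v = ∑' v, F v :=
    ENNReal.summable.tsum_add_tsum_compl ENNReal.summable
  have h2 : (∑' v : {v : List X | n₀ ≤ v.length}, F ↑v)
      = ∑ f : Fin n₀ → X, secSum A S l p (A.sec g (List.ofFn f)) := by
    rw [show (∑' v : {v : List X | n₀ ≤ v.length}, F ↑v)
        = ∑' v : {v : List X // n₀ ≤ v.length}, F ↑v from rfl,
      ← (prependEquiv X n₀).tsum_eq (fun v : {v : List X // n₀ ≤ v.length} => F ↑v)]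
    have heq : ∀ fu : (Fin n₀ → X) × List X,
        F ((prependEquiv X n₀ fu : {v : List X // n₀ ≤ v.length}) : List X)
          = (fun (f : Fin n₀ → X) (u : List X) =>
              if l ≤ wordLength S (A.sec (A.sec g (List.ofFn f)) u) then
                (wordLength S (A.sec (A.sec g (List.ofFn f)) u) : ℝ≥0∞) ^ p else 0) fu.1 fu.2 := by
      intro fu
      simp only [hF, prependEquiv, Equiv.coe_fn_mk, ← A.sec_append]
    rw [tsum_congr heq, ENNReal.tsum_prod (f := fun (f : Fin n₀ → X) (u : List X) =>
      if l ≤ wordLength S (A.sec (A.sec g (List.ofFn f)) u) then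
        (wordLength S (A.sec (A.sec g (List.ofFn f)) u) : ℝ≥0∞) ^ p else 0), tsum_fintype]
    exact Finset.sum_congr rfl fun f _ => by rw [secSum]
  rw [secSum, ← h1, h2, add_comm]

end Sections

/-- Proposition 4.4. If `G` is contracting with nucleus `N ⊆ S`, `p ≥ 1`
and `η_{p,n₀} < 1` for some `n₀ ≥ 1`, then for every `l ≥ 2` there exists `C > 0` such that
for every `g`, `Σ_{v ∈ X*, l(g|_v) ≥ l} l(g|_v)^p ≤ C · l(g)^p` (the sum being finite). -/
theorem sum_long_sections_le {X G : Type*} [Fintype X] [Nonempty X] [Group G]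
    (A : SelfSimilarGroup X G) (S N : Finset G)
    (hgen : Subgroup.closure (S : Set G) = ⊤)
    (hsym : ∀ s ∈ S, s⁻¹ ∈ S)
    (hN : A.IsNucleus N) (hNS : N ⊆ S)
    (p : ℝ) (hp : 1 ≤ p)
    (hcontr : ∃ n₀ : ℕ, 1 ≤ n₀ ∧ eta A S p n₀ < 1)
    (l : ℕ) (hl : 2 ≤ l) :
    ∃ C : ℝ≥0, 0 < C ∧ ∀ g : G,
      (∑' v : List X,
          if l ≤ wordLength S (A.sec g v) then (wordLength S (A.sec g v) : ℝ≥0∞) ^ p else 0)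
        ≤ (C : ℝ≥0∞) * (wordLength S g : ℝ≥0∞) ^ p := by
  classical
  obtain ⟨n₀, hn₀, heta⟩ := hcontr
  have hp0 : (0:ℝ) < p := lt_of_lt_of_le one_pos hp
  have hp0' : (0:ℝ) ≤ p := hp0.le
  have hpne : p ≠ 0 := hp0.ne'
  obtain ⟨M, hM1, hMle⟩ := exists_M A hgen hsym hN hNS
  obtain ⟨ρ, hρ1, hρ2⟩ := exists_between heta
  -- extract the eventual contraction estimate
  have hev : ∀ᶠ g : G in Filter.comap (wordLength S) Filter.atTop,
      (∑ f : Fin n₀ → X, (wordLength S (A.sec g (List.ofFn f)) : ℝ≥0∞) ^ p) ^ (1 / p)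
        / (wordLength S g : ℝ≥0∞) < ρ :=
    Filter.eventually_lt_of_limsup_lt hρ1
  rw [Filter.eventually_comap] at hev
  obtain ⟨m₀, hm₀⟩ := Filter.eventually_atTop.mp hev
  set m := max m₀ 1 with hm
  have hm1 : 1 ≤ m := le_max_right _ _
  have hcon : ∀ g : G, m ≤ wordLength S g →
      (∑ f : Fin n₀ → X, (wordLength S (A.sec g (List.ofFn f)) : ℝ≥0∞) ^ p)
        ≤ ρ ^ p * (wordLength S g : ℝ≥0∞) ^ p := by
    intro g hg
    have hg1 : 1 ≤ wordLength S g := le_trans hm1 hg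
    have hg0 : (wordLength S g : ℝ≥0∞) ≠ 0 := by
      simp only [ne_eq, Nat.cast_eq_zero]; omega
    have hgt : (wordLength S g : ℝ≥0∞) ≠ ⊤ := ENNReal.natCast_ne_top _
    have h := hm₀ (wordLength S g) (le_trans (le_max_left _ _) hg) g rfl
    rw [ENNReal.div_lt_iff (Or.inl hg0) (Or.inl hgt)] at h
    calc (∑ f : Fin n₀ → X, (wordLength S (A.sec g (List.ofFn f)) : ℝ≥0∞) ^ p)
        = (((∑ f : Fin n₀ → X,
            (wordLength S (A.sec g (List.ofFn f)) : ℝ≥0∞) ^ p)) ^ (1/p)) ^ p := by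
          rw [← ENNReal.rpow_mul, one_div_mul_cancel hpne, ENNReal.rpow_one]
      _ ≤ (ρ * (wordLength S g : ℝ≥0∞)) ^ p := ENNReal.rpow_le_rpow h.le hp0'
      _ = ρ ^ p * (wordLength S g : ℝ≥0∞) ^ p := ENNReal.mul_rpow_of_nonneg _ _ hp0'
  have hshrink : ∀ g : G, m ≤ wordLength S g → ∀ f : Fin n₀ → X,
      wordLength S (A.sec g (List.ofFn f)) < wordLength S g := by
    intro g hg f
    have hg1 : 1 ≤ wordLength S g := le_trans hm1 hg
    have hg0 : (wordLength S g : ℝ≥0∞) ≠ 0 := by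
      simp only [ne_eq, Nat.cast_eq_zero]; omega
    have hgt : (wordLength S g : ℝ≥0∞) ≠ ⊤ := ENNReal.natCast_ne_top _
    have h1 : (wordLength S (A.sec g (List.ofFn f)) : ℝ≥0∞) ^ p
        ≤ (ρ * (wordLength S g : ℝ≥0∞)) ^ p := by
      refine le_trans (Finset.single_le_sum
        (f := fun f : Fin n₀ → X => (wordLength S (A.sec g (List.ofFn f)) : ℝ≥0∞) ^ p)
        (fun _ _ => zero_le) (Finset.mem_univ f)) ?_
      rw [ENNReal.mul_rpow_of_nonneg _ _ hp0']
      exact hcon g hg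
    have h2 : (wordLength S (A.sec g (List.ofFn f)) : ℝ≥0∞) ≤ ρ * (wordLength S g : ℝ≥0∞) := by
      have h3 := ENNReal.rpow_le_rpow h1 (by positivity : (0:ℝ) ≤ 1/p)
      rwa [← ENNReal.rpow_mul, ← ENNReal.rpow_mul, mul_one_div_cancel hpne,
        ENNReal.rpow_one, ENNReal.rpow_one] at h3
    have h4 : ρ * (wordLength S g : ℝ≥0∞) < 1 * (wordLength S g : ℝ≥0∞) :=
      by rw [mul_comm ρ, mul_comm 1]; exact ENNReal.mul_lt_mul_right hg0 hgt hρ2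
    rw [one_mul] at h4
    exact_mod_cast lt_of_le_of_lt h2 h4
  -- constants
  have hρtop : ρ ≠ ⊤ := hρ2.ne_top
  set r : ℝ≥0 := ρ.toNNReal with hrdef
  have hρr : ρ = (r : ℝ≥0∞) := (ENNReal.coe_toNNReal hρtop).symm
  have hr1 : r < 1 := by rwa [hρr, ENNReal.coe_lt_one_iff] at hρ2
  set q : ℝ≥0 := r ^ p with hqdef
  have hq1 : q < 1 := NNReal.rpow_lt_one hr1 hp0
  have hρpq : ρ ^ p = (q : ℝ≥0∞) := by
    rw [hρr, ← ENNReal.coe_rpow_of_nonneg _ hp0']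
  haveI fshort : Fintype ↥{v : List X | v.length < n₀} := (List.finite_length_lt X n₀).fintype
  set c0 : ℕ := Fintype.card ↥{v : List X | v.length < n₀} with hc0
  set c1 : ℝ≥0 := (c0 : ℝ≥0) * (M : ℝ≥0) ^ p with hc1
  -- bound for the short part
  have hshort : ∀ g : G,
      (∑' v : ({v : List X | n₀ ≤ v.length}ᶜ : Set (List X)),
          if l ≤ wordLength S (A.sec g ↑v) then (wordLength S (A.sec g ↑v) : ℝ≥0∞) ^ p else 0)
        ≤ (c1 : ℝ≥0∞) * (wordLength S g : ℝ≥0∞) ^ p := by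
    intro g
    have hcompl : ({v : List X | n₀ ≤ v.length}ᶜ : Set (List X))
        = {v : List X | v.length < n₀} := by
      ext v; simp [not_le]
    rw [hcompl, tsum_fintype]
    have hterm : ∀ v : ↥{v : List X | v.length < n₀},
        (if l ≤ wordLength S (A.sec g ↑v) then (wordLength S (A.sec g ↑v) : ℝ≥0∞) ^ p else 0)
          ≤ (M : ℝ≥0∞) ^ p * (wordLength S g : ℝ≥0∞) ^ p := by
      intro v
      have hb : (wordLength S (A.sec g ↑v) : ℝ≥0∞)
          ≤ (M : ℝ≥0∞) * (wordLength S g : ℝ≥0∞) := by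
        exact_mod_cast hMle g ↑v
      split
      · calc (wordLength S (A.sec g ↑v) : ℝ≥0∞) ^ p
            ≤ ((M : ℝ≥0∞) * (wordLength S g : ℝ≥0∞)) ^ p := ENNReal.rpow_le_rpow hb hp0'
          _ = (M : ℝ≥0∞) ^ p * (wordLength S g : ℝ≥0∞) ^ p :=
              ENNReal.mul_rpow_of_nonneg _ _ hp0'
      · exact zero_le
    calc (∑ v : ↥{v : List X | v.length < n₀},
          if l ≤ wordLength S (A.sec g ↑v) then (wordLength S (A.sec g ↑v) : ℝ≥0∞) ^ p else 0)
        ≤ ∑ _v : ↥{v : List X | v.length < n₀},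
            (M : ℝ≥0∞) ^ p * (wordLength S g : ℝ≥0∞) ^ p :=
          Finset.sum_le_sum fun v _ => hterm v
      _ = (c0 : ℝ≥0∞) * ((M : ℝ≥0∞) ^ p * (wordLength S g : ℝ≥0∞) ^ p) := by
          rw [Finset.sum_const, Finset.card_univ, ← hc0, nsmul_eq_mul]
      _ = (c1 : ℝ≥0∞) * (wordLength S g : ℝ≥0∞) ^ p := by
          rw [hc1]
          push_cast [ENNReal.coe_rpow_of_nonneg _ hp0']
          ring
  -- bound on the finite ball of radius m
  have hball : {g : G | wordLength S g < m}.Finite := ball_finite hgen hsym m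
  set C0 : ℝ≥0 := hball.toFinset.sup fun g => (secSum A S l p g).toNNReal with hC0def
  have hC0 : ∀ g : G, wordLength S g < m → secSum A S l p g ≤ (C0 : ℝ≥0∞) := by
    intro g hg
    have hne := secSum_ne_top A hN hNS hl hp0' g
    rw [← ENNReal.coe_toNNReal hne]
    exact ENNReal.coe_le_coe.mpr
      (Finset.le_sup (f := fun g => (secSum A S l p g).toNNReal) (hball.mem_toFinset.mpr hg))
  -- the final constant
  have hsub : 0 < 1 - q := tsub_pos_of_lt hq1
  set C : ℝ≥0 := (c1 + C0 + 1) / (1 - q) with hCdef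
  have hCpos : 0 < C := by
    apply div_pos _ hsub
    positivity
  have hCmul : C * (1 - q) = c1 + C0 + 1 := div_mul_cancel₀ _ hsub.ne'
  have hkey1 : c1 + C * q ≤ C := by
    calc c1 + C * q ≤ (c1 + C0 + 1) + C * q :=
          add_le_add_left (le_add_right (le_add_right le_rfl)) _
      _ = C * (1 - q) + C * q := by rw [hCmul]
      _ = C := by rw [← mul_add, tsub_add_cancel_of_le hq1.le, mul_one]
  have hkey2 : C0 ≤ C := by
    calc C0 ≤ c1 + C0 + 1 := le_add_right (le_add_left le_rfl)
      _ = C * (1 - q) := hCmul.symm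
      _ = C * (1 - q) + C * q - C * q := by rw [add_tsub_cancel_right]
      _ ≤ C * (1 - q) + C * q := tsub_le_self
      _ = C := by rw [← mul_add, tsub_add_cancel_of_le hq1.le, mul_one]
  -- the main induction on the word length
  have main : ∀ k : ℕ, ∀ g : G, wordLength S g = k →
      secSum A S l p g ≤ (C : ℝ≥0∞) * (k : ℝ≥0∞) ^ p := by
    intro k
    induction k using Nat.strong_induction_on with
    | _ k IH =>
      intro g hk
      rcases Nat.eq_zero_or_pos k with h0 | hkpos
      · have hg1 : g = 1 := wl_eq_zero hgen hsym (hk.trans h0)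
        have hz : secSum A S l p g = 0 := by
          rw [secSum]
          have hzz : ∀ v : List X,
              (if l ≤ wordLength S (A.sec g v) then (wordLength S (A.sec g v) : ℝ≥0∞) ^ p
                else 0) = 0 := by
            intro v
            rw [hg1, A.sec_one, wl_one, if_neg (by omega)]
          rw [tsum_congr hzz, tsum_zero]
        rw [hz]; exact zero_le
      rcases lt_or_ge k m with hkm | hkm
      · have h1 : secSum A S l p g ≤ (C0 : ℝ≥0∞) := hC0 g (hk ▸ hkm)
        have h2 : (1:ℝ≥0∞) ≤ (k : ℝ≥0∞) ^ p := by
          rw [show (1:ℝ≥0∞) = (1:ℝ≥0∞) ^ p from (ENNReal.one_rpow p).symm]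
          exact ENNReal.rpow_le_rpow (by exact_mod_cast hkpos) hp0'
        calc secSum A S l p g ≤ (C0 : ℝ≥0∞) := h1
          _ ≤ (C : ℝ≥0∞) := ENNReal.coe_le_coe.mpr hkey2
          _ = (C : ℝ≥0∞) * 1 := (mul_one _).symm
          _ ≤ (C : ℝ≥0∞) * (k : ℝ≥0∞) ^ p := mul_le_mul_right h2 _
      · have hkg : m ≤ wordLength S g := hk ▸ hkm
        rw [secSum_split A S l n₀ p g]
        have hS : (∑ f : Fin n₀ → X, secSum A S l p (A.sec g (List.ofFn f)))
            ≤ (C : ℝ≥0∞) * ((q : ℝ≥0∞) * (k : ℝ≥0∞) ^ p) := by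
          calc (∑ f : Fin n₀ → X, secSum A S l p (A.sec g (List.ofFn f)))
              ≤ ∑ f : Fin n₀ → X,
                  (C : ℝ≥0∞) * (wordLength S (A.sec g (List.ofFn f)) : ℝ≥0∞) ^ p := by
                refine Finset.sum_le_sum fun f _ => ?_
                exact IH _ (by rw [← hk]; exact hshrink g hkg f) _ rfl
            _ = (C : ℝ≥0∞) * ∑ f : Fin n₀ → X,
                  (wordLength S (A.sec g (List.ofFn f)) : ℝ≥0∞) ^ p := by
                rw [Finset.mul_sum]
            _ ≤ (C : ℝ≥0∞) * (ρ ^ p * (wordLength S g : ℝ≥0∞) ^ p) :=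
                mul_le_mul_right (hcon g hkg) _
            _ = (C : ℝ≥0∞) * ((q : ℝ≥0∞) * (k : ℝ≥0∞) ^ p) := by rw [hρpq, hk]
        have hR : (∑' v : ({v : List X | n₀ ≤ v.length}ᶜ : Set (List X)),
            if l ≤ wordLength S (A.sec g ↑v) then (wordLength S (A.sec g ↑v) : ℝ≥0∞) ^ p else 0)
              ≤ (c1 : ℝ≥0∞) * (k : ℝ≥0∞) ^ p := by
          have h := hshort g
          rwa [hk] at h
        calc _ ≤ (c1 : ℝ≥0∞) * (k : ℝ≥0∞) ^ p + (C : ℝ≥0∞) * ((q : ℝ≥0∞) * (k : ℝ≥0∞) ^ p) :=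
              add_le_add hR hS
          _ = ((c1 : ℝ≥0∞) + (C : ℝ≥0∞) * (q : ℝ≥0∞)) * (k : ℝ≥0∞) ^ p := by ring
          _ ≤ (C : ℝ≥0∞) * (k : ℝ≥0∞) ^ p := by
              refine mul_le_mul_left ?_ _
              exact_mod_cast hkey1
  refine ⟨C, hCpos, fun g => ?_⟩
  exact main (wordLength S g) g rfl
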